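/- Let R be a commutative ring of odd prime characteristic p, a ∈ R, and let n, m, r be natural numbers with n+1 = (m+1)·p^r. Then E_n(x, a) = (E_m(x, a))^(p^r) · (x² − 4a)^((p^r − 1)/2); that is, dickson 2 a n = (dickson 2 a m)^(p^r) * (X² − C(4a))^((p^r − 1)/2). -/

import Mathlib

open Polynomial

private lemma dickson_two_eval' {R : Type*} [CommRing R] (x y : R) :
    ∀ n, (x - y) * (dickson 2 (x * y) n).eval (x + y) = x ^ (n + 1) - y ^ (n + 1)
  | 0 => by simp [dickson_zero]; ring
  | 1 => by simp [dickson_one]; ring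
  | n + 2 => by
    have h1 := dickson_two_eval' x y (n + 1)
    have h2 := dickson_two_eval' x y n
    simp only [dickson_add_two, eval_sub, eval_mul, eval_X, eval_C]
    linear_combination (x + y) * h1 - x * y * h2

private lemma dickson_second_field (K : Type*) [Field K] [IsAlgClosed K]
    (p : ℕ) [hp : Fact p.Prime] [CharP K p] (hodd : p ≠ 2)
    (a : K) (n m r : ℕ) (h : n + 1 = (m + 1) * p ^ r) :
    dickson 2 a n =
      (dickson 2 a m) ^ (p ^ r) * (X ^ 2 - C (4 * a)) ^ ((p ^ r - 1) / 2) := by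
  have hq : Odd (p ^ r) := (hp.out.odd_of_ne_two hodd).pow
  have hq1 : 0 < p ^ r := Nat.pow_pos hp.out.pos
  have hdiv : 2 * ((p ^ r - 1) / 2) = p ^ r - 1 :=
    Nat.mul_div_cancel' ((Nat.Odd.sub_odd hq odd_one).two_dvd)
  haveI : Infinite K := IsAlgClosed.instInfinite
  apply eq_of_infinite_eval_eq
  have hfin : {x : K | (X ^ 2 - C (4 * a)).IsRoot x}.Finite :=
    Polynomial.finite_setOf_isRoot (X_pow_sub_C_ne_zero two_pos (4 * a))
  apply Set.Infinite.mono _ (hfin.infinite_compl)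
  rintro x hx
  simp only [Set.mem_compl_iff, Set.mem_setOf_eq, IsRoot, eval_sub, eval_pow, eval_X, eval_C]
    at hx
  obtain ⟨y, hy⟩ := IsAlgClosed.exists_root (X ^ 2 - C x * X + C a)
    (by
      have : (X ^ 2 - C x * X + C a).degree = 2 := by compute_degree!
      rw [this]; exact two_ne_zero)
  simp only [IsRoot, eval_add, eval_sub, eval_mul, eval_pow, eval_X, eval_C] at hy
  set z := x - y with hz
  have hyz : y * z = a := by rw [hz]; linear_combination -hy
  have hsq : (y - z) ^ 2 = x ^ 2 - 4 * a := by rw [hz]; linear_combination 4 * hy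
  have hne : y - z ≠ 0 := by
    intro h0
    apply hx
    rw [← hsq, h0]
    ring
  have hxe : x = y + z := by rw [hz]; ring
  have key1 : (y - z) * (dickson 2 a n).eval x = y ^ (n + 1) - z ^ (n + 1) := by
    rw [hxe, ← hyz]; exact dickson_two_eval' y z n
  have key2 : (y - z) * (dickson 2 a m).eval x = y ^ (m + 1) - z ^ (m + 1) := by
    rw [hxe, ← hyz]; exact dickson_two_eval' y z m
  simp only [Set.mem_setOf_eq, eval_mul, eval_pow, eval_sub, eval_X, eval_C]
  apply mul_left_cancel₀ hne
  calc (y - z) * (dickson 2 a n).eval x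
      = y ^ (n + 1) - z ^ (n + 1) := key1
    _ = (y ^ (m + 1)) ^ (p ^ r) - (z ^ (m + 1)) ^ (p ^ r) := by
        rw [h, pow_mul, pow_mul]
    _ = (y ^ (m + 1) - z ^ (m + 1)) ^ (p ^ r) := (sub_pow_char_pow _ _ _).symm
    _ = ((y - z) * (dickson 2 a m).eval x) ^ (p ^ r) := by rw [key2]
    _ = (y - z) ^ (p ^ r) * ((dickson 2 a m).eval x) ^ (p ^ r) := mul_pow _ _ _
    _ = (y - z) * ((dickson 2 a m).eval x ^ p ^ r *
          (x ^ 2 - 4 * a) ^ ((p ^ r - 1) / 2)) := by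
        rw [← hsq, ← pow_mul, hdiv]
        rw [show (y - z) * ((dickson 2 a m).eval x ^ p ^ r * (y - z) ^ (p ^ r - 1))
            = (y - z) ^ (p ^ r - 1 + 1) * ((dickson 2 a m).eval x) ^ (p ^ r) by ring]
        rw [Nat.sub_add_cancel hq1]

private lemma dickson_second_univ (p : ℕ) [hp : Fact p.Prime] (hodd : p ≠ 2)
    (n m r : ℕ) (h : n + 1 = (m + 1) * p ^ r) :
    dickson 2 (X : Polynomial (ZMod p)) n =
      (dickson 2 (X : Polynomial (ZMod p)) m) ^ (p ^ r) *
        (X ^ 2 - C (4 * (X : Polynomial (ZMod p)))) ^ ((p ^ r - 1) / 2) := by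
  set S := Polynomial (ZMod p)
  set F := FractionRing S
  set K := AlgebraicClosure F
  set g : S →+* K := (algebraMap F K).comp (algebraMap S F) with hgdef
  have hg : Function.Injective g := by
    rw [hgdef, RingHom.coe_comp]
    exact (RingHom.injective (algebraMap F K)).comp (IsFractionRing.injective S F)
  haveI : CharP K p := charP_of_injective_ringHom hg p
  apply Polynomial.map_injective g hg
  rw [Polynomial.map_mul, Polynomial.map_pow, Polynomial.map_pow, Polynomial.map_sub,
    Polynomial.map_pow, Polynomial.map_X, map_C, map_dickson, map_dickson, map_mul, map_ofNat]
  exact dickson_second_field K p hodd (g X) n m r h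

/-- In odd characteristic `p`, if `n + 1 = (m + 1)·p^r` then
`E_n(x, a) = (E_m(x, a))^(p^r) · (x² − 4a)^((p^r − 1)/2)`. -/
theorem dickson_second_pow_char
    (R : Type*) [CommRing R] (p : ℕ) [hp : Fact p.Prime] [CharP R p] (hodd : p ≠ 2)
    (a : R) (n m r : ℕ) (h : n + 1 = (m + 1) * p ^ r) :
    dickson 2 a n =
      (dickson 2 a m) ^ (p ^ r) * (X ^ 2 - C (4 * a)) ^ ((p ^ r - 1) / 2) := by
  set f : Polynomial (ZMod p) →+* R := eval₂RingHom (ZMod.castHom (dvd_refl p) R) a with hf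
  have hfX : f X = a := by rw [hf]; simp
  have := congrArg (Polynomial.map f) (dickson_second_univ p hodd n m r h)
  rwa [Polynomial.map_mul, Polynomial.map_pow, Polynomial.map_pow, Polynomial.map_sub,
    Polynomial.map_pow, Polynomial.map_X, map_C, map_dickson, map_dickson, map_mul, map_ofNat,
    hfX] at this
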